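/- Let (a_n)_{n≥1} be a strictly increasing sequence of positive integers that is quasi-arithmetic of degree 1. Then for no real number α does the sequence ({a_n α})_{n≥1} of fractional parts have Poissonian pair correlations. -/

import Mathlib

open Filter

/-- Distance to the nearest integer. -/
noncomputable def nearestIntDist (x : ℝ) : ℝ := |x - round x|

open Classical in
/-- The pair correlation function
`R₂([-s,s],(x_n),N) = (1/N) · #{1 ≤ i ≠ j ≤ N : ‖x_i − x_j‖ ≤ s/N}`. -/
noncomputable def pairCorrFn (x : ℕ → ℝ) (s : ℝ) (N : ℕ) : ℝ :=
  (1 / (N : ℝ)) * (((Finset.Icc 1 N ×ˢ Finset.Icc 1 N).filter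
    (fun p => p.1 ≠ p.2 ∧ nearestIntDist (x p.1 - x p.2) ≤ s / N)).card : ℝ)

/-- A sequence has Poissonian pair correlations if `R₂ → 2s` for every `s > 0`. -/
def HasPoissonianPairCorrelations (x : ℕ → ℝ) : Prop :=
  ∀ s : ℝ, 0 < s → Tendsto (fun N : ℕ => pairCorrFn x s N) atTop (nhds (2 * s))

/-- The `d`-dimensional arithmetic progression
`{h + ∑ j r_j k_j : 0 ≤ r_j < s_j}`. -/
def genAP (d : ℕ) (h : ℤ) (k s : Fin d → ℤ) : Set ℤ :=
  {x | ∃ r : Fin d → ℤ, (∀ j, 0 ≤ r j ∧ r j < s j) ∧ x = h + ∑ j, r j * k j}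

/-- A sequence `(a_n)_{n ≥ 1}` of positive integers is quasi-arithmetic of degree `d`
if there are constants `C, K > 0` and a strictly increasing sequence `(N_i)` of
positive integers such that for every `i` some subset of `{a_1, …, a_{N_i}}` of
cardinality at least `C·N_i` is contained in a `d`-dimensional arithmetic progression
of size at most `K·N_i`. -/
def QuasiArithmetic (a : ℕ → ℕ) (d : ℕ) : Prop :=
  ∃ C K : ℝ, 0 < C ∧ 0 < K ∧ ∃ N : ℕ → ℕ, StrictMono N ∧ (∀ i, 0 < N i) ∧
    ∀ i, ∃ A : Finset ℤ,
      (∀ x ∈ A, ∃ n, 1 ≤ n ∧ n ≤ N i ∧ (a n : ℤ) = x) ∧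
      C * (N i : ℝ) ≤ (A.card : ℝ) ∧
      ∃ h : ℤ, ∃ k s : Fin d → ℤ,
        (↑A : Set ℤ) ⊆ genAP d h k s ∧ ((∏ j, s j : ℤ) : ℝ) ≤ K * (N i : ℝ)


namespace NID
lemma nonneg (x : ℝ) : 0 ≤ nearestIntDist x := abs_nonneg _
lemma le_abs_sub_int (x : ℝ) (n : ℤ) : nearestIntDist x ≤ |x - n| := round_le x n
lemma le_abs (x : ℝ) : nearestIntDist x ≤ |x| := by simpa using le_abs_sub_int x 0
lemma add_int (x : ℝ) (n : ℤ) : nearestIntDist (x + n) = nearestIntDist x := by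
  unfold nearestIntDist
  rw [round_add_intCast]
  push_cast
  ring_nf
lemma eq_of_sub_int {x y : ℝ} (n : ℤ) (h : x - y = n) : nearestIntDist x = nearestIntDist y := by
  have : x = y + n := by linarith
  rw [this, add_int]
lemma neg (x : ℝ) : nearestIntDist (-x) = nearestIntDist x := by
  apply le_antisymm
  · calc nearestIntDist (-x) ≤ |-x - (-(round x) : ℤ)| := le_abs_sub_int _ _
      _ = |x - round x| := by push_cast; rw [abs_sub_comm]; ring_nf
      _ = nearestIntDist x := rfl
  · calc nearestIntDist x ≤ |x - (-(round (-x)) : ℤ)| := le_abs_sub_int _ _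
      _ = |-x - round (-x)| := by push_cast; rw [abs_sub_comm]; ring_nf
      _ = nearestIntDist (-x) := rfl
lemma triangle (x y : ℝ) : nearestIntDist (x + y) ≤ nearestIntDist x + nearestIntDist y := by
  calc nearestIntDist (x + y) ≤ |x + y - (round x + round y : ℤ)| := le_abs_sub_int _ _
    _ = |(x - round x) + (y - round y)| := by push_cast; ring_nf
    _ ≤ |x - round x| + |y - round y| := abs_add_le _ _
lemma nsmul (t : ℕ) (x : ℝ) : nearestIntDist (t * x) ≤ t * nearestIntDist x := by
  induction t with
  | zero => simp [nearestIntDist]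
  | succ n ih =>
      have h : ((n+1 : ℕ) : ℝ) * x = (n : ℝ) * x + x := by push_cast; ring
      rw [h]
      calc nearestIntDist ((n : ℝ) * x + x) ≤ nearestIntDist ((n:ℝ)*x) + nearestIntDist x :=
            triangle _ _
        _ ≤ n * nearestIntDist x + nearestIntDist x := by linarith
        _ = ((n+1 : ℕ) : ℝ) * nearestIntDist x := by push_cast; ring
lemma zsmul (t : ℤ) (x : ℝ) : nearestIntDist (t * x) ≤ |t| * nearestIntDist x := by
  rcases le_or_gt 0 t with ht | ht
  · lift t to ℕ using ht
    simpa using nsmul t x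
  · have h1 : (t : ℝ) * x = -((-t : ℤ) * x) := by push_cast; ring
    rw [h1, neg]
    have h2 := nsmul (-t).toNat x
    have h3 : ((-t).toNat : ℝ) = ((-t : ℤ) : ℝ) := by
      have : (0:ℤ) ≤ -t := by omega
      exact_mod_cast Int.toNat_of_nonneg this
    rw [h3] at h2
    have h4 : ((|t| : ℤ) : ℝ) = ((-t : ℤ) : ℝ) := by
      have : |t| = -t := abs_of_neg ht
      exact_mod_cast this
    rw [h4]
    exact h2
end NID

namespace IH
lemma ediv_bounds (a : ℤ) {b : ℤ} (hb : 0 < b) : b * (a/b) ≤ a ∧ a < b * (a/b) + b := by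
  have h1 := Int.mul_ediv_add_emod a b
  have h2 := Int.emod_nonneg a (ne_of_gt hb)
  have h3 := Int.emod_lt_of_pos a hb
  constructor <;> linarith
lemma ediv_le_of_lt_mul {a b c : ℤ} (hb : 0 < b) (h : a < (c+1)*b) : a / b ≤ c := by
  by_contra hcon
  push_neg at hcon
  have h3 : (c+1) ≤ a/b := hcon
  have h4 : b * (c+1) ≤ b * (a/b) := mul_le_mul_of_nonneg_left h3 (le_of_lt hb)
  have h5 := (ediv_bounds a hb).1
  nlinarith
lemma one_le_ediv {a b : ℤ} (hb : 0 < b) (h : b ≤ a) : 1 ≤ a / b := by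
  by_contra hcon
  push_neg at hcon
  have h3 : a/b ≤ 0 := by omega
  have h4 : b * (a/b) ≤ 0 := mul_nonpos_of_nonneg_of_nonpos (le_of_lt hb) h3
  have h5 := (ediv_bounds a hb).2
  linarith
lemma abs_sub_lt_of_ediv_eq {x y b : ℤ} (hb : 0 < b) (h : x / b = y / b) : |x - y| < b := by
  have h1 := (ediv_bounds x hb).1
  have h2 := (ediv_bounds x hb).2
  have h3 := (ediv_bounds y hb).1
  have h4 := (ediv_bounds y hb).2
  rw [h] at h1 h2
  rw [abs_lt]
  constructor <;> linarith
lemma cast_ediv_le {a b : ℤ} (hb : 0 < b) : ((a/b : ℤ) : ℝ) ≤ (a:ℝ)/(b:ℝ) := by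
  have h1 := (ediv_bounds a hb).1
  have hbR : (0:ℝ) < (b:ℝ) := by exact_mod_cast hb
  rw [le_div_iff₀ hbR]
  have : ((b * (a/b) : ℤ) : ℝ) ≤ ((a:ℤ):ℝ) := by exact_mod_cast h1
  push_cast at this
  linarith
lemma dvd_of_emod_eq {x y b : ℤ} (h : x % b = y % b) : b ∣ (x - y) := by
  have hx := Int.emod_add_mul_ediv x b
  have hy := Int.emod_add_mul_ediv y b
  refine ⟨x / b - y / b, ?_⟩
  have : x - y = x % b + b * (x/b) - (y % b + b * (y/b)) := by linarith
  rw [this, h]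
  ring
end IH

lemma cs_fibers {γ : Type*} [DecidableEq γ] (A : Finset ℤ) (ψ : ℤ → γ) :
    (A.card : ℝ)^2 ≤ ((A.image ψ).card : ℝ) *
      ((((A ×ˢ A).filter (fun p => p.1 ≠ p.2 ∧ ψ p.1 = ψ p.2)).card : ℝ) + A.card) := by
  classical
  set img := A.image ψ with himg
  have hsum : A.card = ∑ y ∈ img, (A.filter (fun x => ψ x = y)).card :=
    Finset.card_eq_sum_card_fiberwise (fun x hx => Finset.mem_image_of_mem ψ hx)
  have hpairs : ((A ×ˢ A).filter (fun p => ψ p.1 = ψ p.2)).card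
      = ∑ y ∈ img, ((A.filter (fun x => ψ x = y)).card)^2 := by
    rw [Finset.card_eq_sum_card_fiberwise
      (f := fun p : ℤ × ℤ => ψ p.1)
      (t := img) (by
        intro p hp
        simp only [Finset.mem_coe, Finset.mem_filter, Finset.mem_product] at hp
        exact Finset.mem_image_of_mem ψ hp.1.1)]
    apply Finset.sum_congr rfl
    intro y _
    have heq : ((A ×ˢ A).filter (fun p => ψ p.1 = ψ p.2)).filter (fun p => ψ p.1 = y)
        = (A.filter (fun x => ψ x = y)) ×ˢ (A.filter (fun x => ψ x = y)) := by
      ext p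
      simp only [Finset.mem_filter, Finset.mem_product]
      constructor
      · rintro ⟨⟨⟨h1, h2⟩, h3⟩, h4⟩
        exact ⟨⟨h1, h4⟩, ⟨h2, by rw [← h3]; exact h4⟩⟩
      · rintro ⟨⟨h1, h2⟩, ⟨h3, h4⟩⟩
        exact ⟨⟨⟨h1, h3⟩, by rw [h2, h4]⟩, h2⟩
    rw [heq, Finset.card_product, sq]
  have hsplit : ((A ×ˢ A).filter (fun p => ψ p.1 = ψ p.2)).card
      ≤ (((A ×ˢ A).filter (fun p => p.1 ≠ p.2 ∧ ψ p.1 = ψ p.2)).card) + A.card := by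
    have hsub : ((A ×ˢ A).filter (fun p => ψ p.1 = ψ p.2))
        ⊆ (((A ×ˢ A).filter (fun p => p.1 ≠ p.2 ∧ ψ p.1 = ψ p.2)) ∪ A.image (fun x => (x,x))) := by
      intro p hp
      simp only [Finset.mem_filter, Finset.mem_product] at hp
      by_cases hd : p.1 = p.2
      · apply Finset.mem_union_right
        apply Finset.mem_image.2
        exact ⟨p.1, hp.1.1, by rw [Prod.ext_iff]; exact ⟨rfl, hd⟩⟩
      · apply Finset.mem_union_left
        simp only [Finset.mem_filter, Finset.mem_product]
        exact ⟨hp.1, hd, hp.2⟩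
    calc ((A ×ˢ A).filter (fun p => ψ p.1 = ψ p.2)).card
        ≤ (((A ×ˢ A).filter (fun p => p.1 ≠ p.2 ∧ ψ p.1 = ψ p.2)) ∪ A.image (fun x => (x,x))).card :=
          Finset.card_le_card hsub
      _ ≤ _ := by
          refine (Finset.card_union_le _ _).trans ?_
          gcongr
          exact Finset.card_image_le
  have hcs : (∑ y ∈ img, ((A.filter (fun x => ψ x = y)).card : ℝ))^2
      ≤ (img.card : ℝ) * ∑ y ∈ img, (((A.filter (fun x => ψ x = y)).card : ℝ))^2 := by
    exact_mod_cast sq_sum_le_card_mul_sum_sq (s := img)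
      (f := fun y => ((A.filter (fun x => ψ x = y)).card : ℝ))
  have h1 : (A.card : ℝ) = ∑ y ∈ img, ((A.filter (fun x => ψ x = y)).card : ℝ) := by
    rw [hsum]; push_cast; rfl
  have h2 : (∑ y ∈ img, (((A.filter (fun x => ψ x = y)).card : ℝ))^2)
      = (((A ×ˢ A).filter (fun p => ψ p.1 = ψ p.2)).card : ℝ) := by
    rw [hpairs]; push_cast; rfl
  calc (A.card : ℝ)^2 = (∑ y ∈ img, ((A.filter (fun x => ψ x = y)).card : ℝ))^2 := by rw [h1]
    _ ≤ (img.card : ℝ) * ∑ y ∈ img, (((A.filter (fun x => ψ x = y)).card : ℝ))^2 := hcs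
    _ = (img.card : ℝ) * (((A ×ˢ A).filter (fun p => ψ p.1 = ψ p.2)).card : ℝ) := by rw [h2]
    _ ≤ _ := by
        gcongr
        exact_mod_cast hsplit

lemma exists_big_fiber {ι : Type*} [DecidableEq ι] (E : Finset (ℤ × ℤ)) (S : Finset ι)
    (g : ι → Finset (ℤ × ℤ)) (hS : S.Nonempty)
    (hcov : E ⊆ S.biUnion g) :
    ∃ t ∈ S, E.card ≤ S.card * (g t).card := by
  obtain ⟨t, htS, hmax⟩ := S.exists_max_image (fun t => (g t).card) hS
  refine ⟨t, htS, ?_⟩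
  calc E.card ≤ (S.biUnion g).card := Finset.card_le_card hcov
    _ ≤ ∑ u ∈ S, (g u).card := Finset.card_biUnion_le
    _ ≤ ∑ _u ∈ S, (g t).card := Finset.sum_le_sum (fun u hu => hmax u hu)
    _ = S.card * (g t).card := by rw [Finset.sum_const, smul_eq_mul]

open Classical in
noncomputable def pcCnt (x : ℕ → ℝ) (s : ℝ) (N : ℕ) : ℕ :=
  ((Finset.Icc 1 N ×ˢ Finset.Icc 1 N).filter
    (fun p => p.1 ≠ p.2 ∧ nearestIntDist (x p.1 - x p.2) ≤ s / N)).card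

lemma pcCnt_eq (x : ℕ → ℝ) (s : ℝ) (N : ℕ)
    [DecidablePred (fun p : ℕ × ℕ => p.1 ≠ p.2 ∧ nearestIntDist (x p.1 - x p.2) ≤ s / N)] :
    pcCnt x s N = ((Finset.Icc 1 N ×ˢ Finset.Icc 1 N).filter
      (fun p => p.1 ≠ p.2 ∧ nearestIntDist (x p.1 - x p.2) ≤ s / N)).card := by
  unfold pcCnt
  congr 1
  apply Finset.filter_congr_decidable

set_option maxHeartbeats 2000000 in
lemma main_step
    (a : ℕ → ℕ) (α : ℝ) (C K : ℝ) (hC : 0 < C) (hK : 0 < K)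
    (T : ℕ) (hT2 : 2 ≤ T) (hT : 4 * K ≤ C^2 * T)
    (N : ℕ) (hN1 : 4 * (T:ℝ) ≤ C * N)
    (A : Finset ℤ) (hidx : ∀ x ∈ A, ∃ n, 1 ≤ n ∧ n ≤ N ∧ (a n : ℤ) = x)
    (hcard : C * (N:ℝ) ≤ A.card)
    (h L k : ℤ) (hsub : ∀ x ∈ A, ∃ r : ℤ, 0 ≤ r ∧ r < L ∧ x = h + r * k)
    (hLK : (L:ℝ) ≤ K * N) :
    ∃ δ : ℝ, 0 ≤ δ ∧ (N:ℝ) * δ ≤ 8 * T^2 / C ∧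
      ∀ s₁ s₂ : ℝ, s₁ / N < δ → δ ≤ s₂ / N →
        (pcCnt (fun n => Int.fract ((a n : ℝ) * α)) s₁ N : ℝ) + 2 * (C^2/(8*K)) * N
          ≤ (pcCnt (fun n => Int.fract ((a n : ℝ) * α)) s₂ N : ℝ) := by
  classical
  have hT0 : (0:ℝ) < T := by positivity
  have hTR2 : (2:ℝ) ≤ T := by exact_mod_cast hT2
  have hCN8 : (8:ℝ) ≤ C * N := by nlinarith
  have hN0 : (0:ℝ) < N := by nlinarith
  have hNn : 0 < N := by exact_mod_cast hN0
  set M := A.card with hMdef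
  have hMR : C * (N:ℝ) ≤ M := hcard
  have hM8 : (8:ℝ) ≤ M := le_trans hCN8 hMR
  -- choice functions
  set ρ : ℤ → ℤ := fun x => if hx : x ∈ A then (hsub x hx).choose else 0 with hρdef
  have hρ : ∀ x ∈ A, 0 ≤ ρ x ∧ ρ x < L ∧ x = h + ρ x * k := by
    intro x hx
    rw [hρdef]
    simp only [dif_pos hx]
    exact (hsub x hx).choose_spec
  set nx : ℤ → ℕ := fun x => if hx : x ∈ A then (hidx x hx).choose else 0 with hnxdef
  have hnx : ∀ x ∈ A, 1 ≤ nx x ∧ nx x ≤ N ∧ (a (nx x) : ℤ) = x := by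
    intro x hx
    rw [hnxdef]
    simp only [dif_pos hx]
    exact (hidx x hx).choose_spec
  have hk0 : k ≠ 0 := by
    intro hk
    have hsubs : A ⊆ {h} := by
      intro x hx
      obtain ⟨_, _, hx3⟩ := hρ x hx
      rw [Finset.mem_singleton, hx3, hk, mul_zero, add_zero]
    have hcard1 := Finset.card_le_card hsubs
    rw [Finset.card_singleton] at hcard1
    have : (M:ℝ) ≤ 1 := by exact_mod_cast hcard1
    linarith
  have hρinj : ∀ x ∈ A, ∀ y ∈ A, ρ x = ρ y → x = y := by
    intro x hx y hy hxy
    rw [(hρ x hx).2.2, (hρ y hy).2.2, hxy]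
  have hMN : (M:ℝ) ≤ N := by
    have hle : A.card ≤ (Finset.Icc 1 N).card := by
      apply Finset.card_le_card_of_injOn nx
      · intro x hx
        obtain ⟨h1, h2, _⟩ := hnx x hx
        exact Finset.mem_Icc.2 ⟨h1, h2⟩
      · intro x hx y hy hxy
        have e1 := (hnx x hx).2.2
        have e2 := (hnx y hy).2.2
        rw [← e1, ← e2, hxy]
    rw [Nat.card_Icc] at hle
    have : M ≤ N := by omega
    exact_mod_cast this
  have hL0 : 0 < L := by
    have hA : A.Nonempty := by
      rw [← Finset.card_pos]
      have : (0:ℝ) < M := by linarith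
      exact_mod_cast this
    obtain ⟨x, hx⟩ := hA
    obtain ⟨h1, h2, _⟩ := hρ x hx
    omega
  have hML : (M:ℝ) ≤ (L:ℝ) := by
    have hinj : A.card ≤ (Finset.Icc 0 (L-1)).card := by
      apply Finset.card_le_card_of_injOn ρ
      · intro x hx
        obtain ⟨h1, h2, _⟩ := hρ x hx
        exact Finset.mem_Icc.2 ⟨h1, by omega⟩
      · intro x hx y hy hxy
        exact hρinj x hx y hy hxy
    rw [Int.card_Icc] at hinj
    have : (M : ℤ) ≤ L := by omega
    exact_mod_cast this
  have hLN : (4:ℝ) * T ≤ (L:ℝ) := by linarith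
  have hLTz : 4 * (T:ℤ) ≤ L := by exact_mod_cast hLN
  have hTz : (0:ℤ) < (T:ℤ) := by exact_mod_cast hT0
  set β : ℝ := (k:ℝ) * α with hβdef
  set ℓ : ℤ := L / (T:ℤ) with hℓdef
  have hℓ1 : 1 ≤ ℓ := IH.one_le_ediv hTz (by omega)
  have hℓL : (ℓ:ℝ) ≤ (L:ℝ)/(T:ℝ) := IH.cast_ediv_le hTz
  set Q : ℕ := ⌊C*N/(4*T)⌋₊ with hQdef
  have hQ1 : 1 ≤ Q := by
    rw [hQdef]
    apply Nat.le_floor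
    rw [Nat.cast_one, le_div_iff₀ (by positivity)]
    linarith
  have hQR1 : (1:ℝ) ≤ Q := by exact_mod_cast hQ1
  have hQ0 : (0:ℝ) < Q := by linarith
  have hQup : (Q:ℝ) ≤ C*N/(4*T) := Nat.floor_le (by positivity)
  have hQdown : C*N/(8*T) ≤ Q := by
    rcases le_or_gt 2 (C*N/(4*T)) with hc | hc
    · have hfl := Nat.sub_one_lt_floor (C*N/(4*T))
      rw [← hQdef] at hfl
      have h2 : C*N/(8*T) = (C*N/(4*T))/2 := by ring
      rw [h2]; linarith
    · have h2 : C*N/(8*T) = (C*N/(4*T))/2 := by ring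
      rw [h2]; linarith
  -- STEP 1 : find d
  have hmaps : ∀ x ∈ A, (ρ x / ℓ, ⌊Int.fract ((ρ x : ℝ) * β) * Q⌋)
      ∈ (Finset.Icc (0:ℤ) (2*T)) ×ˢ (Finset.Icc (0:ℤ) ((Q:ℤ) - 1)) := by
    intro x hx
    obtain ⟨hr0, hrL, _⟩ := hρ x hx
    rw [Finset.mem_product]
    refine ⟨Finset.mem_Icc.2 ⟨Int.ediv_nonneg hr0 (by omega), ?_⟩, Finset.mem_Icc.2 ⟨?_, ?_⟩⟩
    · apply IH.ediv_le_of_lt_mul (by omega)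
      have e1 := (IH.ediv_bounds L hTz).1
      have e2 := (IH.ediv_bounds L hTz).2
      rw [← hℓdef] at e1 e2
      nlinarith [hℓ1]
    · have hf0 := Int.fract_nonneg ((ρ x : ℝ) * β)
      positivity
    · have hf1 := Int.fract_lt_one ((ρ x : ℝ) * β)
      have hfloor : ⌊Int.fract ((ρ x : ℝ) * β) * Q⌋ < (Q:ℤ) := by
        rw [Int.floor_lt]
        push_cast
        nlinarith [Int.fract_nonneg ((ρ x : ℝ) * β)]
      omega
  have hcardlt : ((Finset.Icc (0:ℤ) (2*T)) ×ˢ (Finset.Icc (0:ℤ) ((Q:ℤ) - 1))).card < A.card := by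
    have hc1 : (Finset.Icc (0:ℤ) (2*(T:ℤ))).card = 2*T+1 := by
      rw [Int.card_Icc]; omega
    have hc2 : (Finset.Icc (0:ℤ) ((Q:ℤ)-1)).card = Q := by
      rw [Int.card_Icc]; omega
    rw [Finset.card_product, hc1, hc2]
    have key : ((2*T+1 : ℕ):ℝ) * (Q:ℝ) < M := by
      push_cast
      have h1 : (2*(T:ℝ) + 1) * Q ≤ (2*(T:ℝ)+1) * (C*N/(4*T)) :=
        mul_le_mul_of_nonneg_left hQup (by positivity)
      have h2 : (2*(T:ℝ)+1) * (C*N/(4*T)) ≤ (3/4) * (C*N) := by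
        rw [show (2*(T:ℝ)+1) * (C*N/(4*T)) = (C*N) * ((2*T+1)/(4*T)) by ring]
        have : ((2*(T:ℝ)+1)/(4*T)) ≤ 3/4 := by
          rw [div_le_iff₀ (by positivity)]
          nlinarith
        nlinarith
      nlinarith
    have : ((2*T+1) * Q : ℕ) < (M:ℝ) := by push_cast; push_cast at key; linarith
    exact_mod_cast this
  obtain ⟨x0, y0, hx0, hy0, hρlt, he1, he2⟩ :
      ∃ x y, x ∈ A ∧ y ∈ A ∧ ρ y < ρ x ∧ ρ x / ℓ = ρ y / ℓ ∧
        ⌊Int.fract ((ρ x : ℝ) * β) * Q⌋ = ⌊Int.fract ((ρ y : ℝ) * β) * Q⌋ := by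
    obtain ⟨x, hx, y, hy, hne, heq⟩ :=
      Finset.exists_ne_map_eq_of_card_lt_of_maps_to hcardlt hmaps
    obtain ⟨q1, q2⟩ := Prod.mk.injEq .. ▸ heq
    have hρne : ρ x ≠ ρ y := fun hc => hne (hρinj x hx y hy hc)
    rcases lt_or_gt_of_ne hρne with hlt | hlt
    · exact ⟨y, x, hy, hx, hlt, q1.symm, q2.symm⟩
    · exact ⟨x, y, hx, hy, hlt, q1, q2⟩
  set d : ℤ := ρ x0 - ρ y0 with hddef
  have hd1 : 1 ≤ d := by omega
  have hdz : (0:ℤ) < d := by omega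
  have hdℓ : d < ℓ := by
    have := IH.abs_sub_lt_of_ediv_eq (by omega : (0:ℤ) < ℓ) he1
    rw [abs_lt] at this
    omega
  have hdL : (d:ℝ) ≤ (L:ℝ)/(T:ℝ) := by
    have : (d:ℝ) ≤ (ℓ:ℝ) := by exact_mod_cast le_of_lt hdℓ
    linarith
  have hdβ : nearestIntDist ((d:ℝ)*β) ≤ 8*T/(C*N) := by
    set u := Int.fract ((ρ x0 : ℝ) * β) with hu
    set v := Int.fract ((ρ y0 : ℝ) * β) with hv
    have huv : |u - v| < 1/Q := by
      have b1 : ((⌊u*Q⌋ : ℤ):ℝ) ≤ u*Q := Int.floor_le _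
      have b2 : u*Q < ⌊u*Q⌋ + 1 := Int.lt_floor_add_one _
      have b3 : ((⌊v*Q⌋ : ℤ):ℝ) ≤ v*Q := Int.floor_le _
      have b4 : v*Q < ⌊v*Q⌋ + 1 := Int.lt_floor_add_one _
      rw [he2] at b1 b2
      have h5 : (u - v)*Q < 1 := by nlinarith
      have h6 : (v - u)*Q < 1 := by nlinarith
      rw [abs_lt]
      constructor
      · have := (lt_div_iff₀ hQ0).mpr h6
        linarith
      · exact (lt_div_iff₀ hQ0).mpr h5
    have hnd : nearestIntDist ((d:ℝ)*β) = nearestIntDist (u - v) := by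
      apply NID.eq_of_sub_int (n := ⌊(ρ x0 : ℝ) * β⌋ - ⌊(ρ y0 : ℝ) * β⌋)
      rw [hu, hv, Int.fract, Int.fract]
      push_cast [hddef]
      ring
    rw [hnd]
    calc nearestIntDist (u - v) ≤ |u - v| := NID.le_abs _
      _ ≤ 1/Q := le_of_lt huv
      _ ≤ 8*T/(C*N) := by
          rw [div_le_div_iff₀ hQ0 (by positivity)]
          have h8 : 8*(T:ℝ) * (C*N/(8*T)) = C*N := by field_simp
          have h9 := mul_le_mul_of_nonneg_left hQdown (by positivity : (0:ℝ) ≤ 8*T)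
          rw [h8] at h9
          linarith
  -- STEP 2 : blocks modulo d, Cauchy-Schwarz
  set ψ : ℤ → ℤ × ℤ := fun x => (ρ x % d, ρ x / (d * T)) with hψdef
  have hdT : (0:ℤ) < d * T := by positivity
  set E : Finset (ℤ × ℤ) := (A ×ˢ A).filter (fun p => p.1 ≠ p.2 ∧ ψ p.1 = ψ p.2) with hEdef
  have hFbound : (((A.image ψ).card : ℝ)) ≤ 2*(K*(N:ℝ))/T := by
    have hsubbox : A.image ψ ⊆ (Finset.Icc 0 (d-1)) ×ˢ (Finset.Icc 0 ((L-1)/(d*T))) := by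
      intro z hz
      obtain ⟨x, hx, hxz⟩ := Finset.mem_image.1 hz
      obtain ⟨hr0, hrL, _⟩ := hρ x hx
      rw [← hxz, hψdef]
      rw [Finset.mem_product]
      dsimp only
      constructor
      · rw [Finset.mem_Icc]
        refine ⟨Int.emod_nonneg _ (by omega), ?_⟩
        have := Int.emod_lt_of_pos (ρ x) hdz
        omega
      · rw [Finset.mem_Icc]
        refine ⟨Int.ediv_nonneg hr0 (by omega), ?_⟩
        apply Int.ediv_le_ediv hdT
        omega
    have hcard2 := Finset.card_le_card hsubbox
    rw [Finset.card_product, Int.card_Icc, Int.card_Icc] at hcard2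
    have hq0 : 0 ≤ (L-1)/(d*T) := Int.ediv_nonneg (by omega) (by omega)
    have hcast : ((A.image ψ).card : ℝ) ≤ (d:ℝ) * (((L-1)/(d*T) : ℤ):ℝ) + d := by
      have e1 : ((d - 1 + 1 - 0).toNat : ℤ) = d := by omega
      have e2 : (((L-1)/(d*T) + 1 - 0).toNat : ℤ) = (L-1)/(d*T) + 1 := by omega
      have : ((A.image ψ).card : ℤ) ≤ d * ((L-1)/(d*T) + 1) := by
        calc ((A.image ψ).card : ℤ) ≤ ((d - 1 + 1 - 0).toNat * ((L-1)/(d*T) + 1 - 0).toNat : ℕ) := by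
              exact_mod_cast hcard2
          _ = d * ((L-1)/(d*T) + 1) := by push_cast [e1, e2]; ring
      calc ((A.image ψ).card : ℝ) ≤ ((d * ((L-1)/(d*T) + 1) : ℤ) : ℝ) := by exact_mod_cast this
        _ = (d:ℝ) * (((L-1)/(d*T) : ℤ):ℝ) + d := by push_cast; ring
    have hdiv : (((L-1)/(d*T) : ℤ):ℝ) ≤ ((L:ℝ)-1)/((d:ℝ)*T) := by
      have h10 := IH.cast_ediv_le (a := L - 1) hdT
      push_cast at h10 ⊢
      exact h10
    have hdR : (0:ℝ) < (d:ℝ) := by exact_mod_cast hdz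
    have key : (d:ℝ) * (((L-1)/(d*T) : ℤ):ℝ) ≤ ((L:ℝ)-1)/(T:ℝ) := by
      calc (d:ℝ) * (((L-1)/(d*T) : ℤ):ℝ) ≤ (d:ℝ) * (((L:ℝ)-1)/((d:ℝ)*T)) := by
            apply mul_le_mul_of_nonneg_left hdiv (le_of_lt hdR)
        _ = ((L:ℝ)-1)/(T:ℝ) := by field_simp
    have hLR0 : (0:ℝ) < (L:ℝ) := by exact_mod_cast hL0
    calc ((A.image ψ).card : ℝ) ≤ (d:ℝ) * (((L-1)/(d*T) : ℤ):ℝ) + d := hcast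
      _ ≤ ((L:ℝ)-1)/(T:ℝ) + (L:ℝ)/(T:ℝ) := by linarith
      _ ≤ 2*(L:ℝ)/T := by
          rw [← add_div]
          gcongr
          linarith
      _ ≤ 2*(K*(N:ℝ))/T := by gcongr
  -- STEP 2b : Cauchy-Schwarz lower bound on E
  have hcsb := cs_fibers A ψ
  rw [← hEdef, ← hMdef] at hcsb
  have hEM : (0:ℝ) ≤ (E.card:ℝ) + M := add_nonneg (Nat.cast_nonneg _) (Nat.cast_nonneg _)
  have hEb : C^2*(N:ℝ)*T/(2*K) - N ≤ (E.card:ℝ) := by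
    have hMsq : (C*(N:ℝ))^2 ≤ (M:ℝ)^2 := by nlinarith
    have h1 : (M:ℝ)^2 ≤ (2*(K*(N:ℝ))/T) * ((E.card:ℝ) + M) :=
      le_trans hcsb (mul_le_mul_of_nonneg_right hFbound hEM)
    have h2 : C^2*(N:ℝ)^2 * T ≤ 2*(K*(N:ℝ))*((E.card:ℝ) + M) := by
      have h3 := mul_le_mul_of_nonneg_right h1 (le_of_lt hT0)
      have hsimp : (2*(K*(N:ℝ))/T) * ((E.card:ℝ) + M) * T = 2*(K*(N:ℝ))*((E.card:ℝ)+M) := by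
        rw [mul_right_comm, div_mul_cancel₀ _ hT0.ne']
      rw [hsimp] at h3
      nlinarith
    have h3 : (N:ℝ) * (C^2*(N:ℝ)*T) ≤ (N:ℝ) * (((E.card:ℝ) + N) * (2*K)) := by
      nlinarith [mul_le_mul_of_nonneg_left hMN (by positivity : (0:ℝ) ≤ 2*(K*(N:ℝ)))]
    have h4 : C^2*(N:ℝ)*T ≤ ((E.card:ℝ) + N) * (2*K) := (mul_le_mul_iff_right₀ hN0).mp h3
    rw [sub_le_iff_le_add, div_le_iff₀ (by positivity : (0:ℝ) < 2*K)]
    linarith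
  -- STEP 3 : pick a popular difference t₀ * d
  set S : Finset ℤ := (Finset.Icc (-(T:ℤ)+1) ((T:ℤ)-1)).erase 0 with hSdef
  have hScard : (S.card : ℝ) ≤ 2*T := by
    have h1 : S.card ≤ (Finset.Icc (-(T:ℤ)+1) ((T:ℤ)-1)).card :=
      Finset.card_le_card (Finset.erase_subset _ _)
    rw [Int.card_Icc] at h1
    have h2 : S.card ≤ 2*T := by omega
    calc (S.card:ℝ) ≤ ((2*T : ℕ):ℝ) := by exact_mod_cast h2
      _ = 2*T := by push_cast; ring
  have hSne : S.Nonempty := by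
    refine ⟨1, ?_⟩
    rw [hSdef]
    exact Finset.mem_erase.2 ⟨one_ne_zero, Finset.mem_Icc.2 ⟨by omega, by omega⟩⟩
  have hcov : E ⊆ S.biUnion (fun t => E.filter (fun p => ρ p.1 - ρ p.2 = t * d)) := by
    intro p hp
    have hp' := hp
    rw [hEdef] at hp'
    simp only [Finset.mem_filter, Finset.mem_product] at hp'
    obtain ⟨⟨hp1, hp2⟩, hpne, hpψ⟩ := hp'
    rw [hψdef] at hpψ
    simp only [Prod.mk.injEq] at hpψ
    obtain ⟨hmod, hdiv2⟩ := hpψ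
    obtain ⟨c, hc⟩ := IH.dvd_of_emod_eq hmod
    have habs := IH.abs_sub_lt_of_ediv_eq hdT hdiv2
    have hcne : c ≠ 0 := by
      intro hc0
      rw [hc0, mul_zero] at hc
      exact hpne (hρinj _ hp1 _ hp2 (by omega))
    have hcT : |c| < (T:ℤ) := by
      rw [hc, abs_mul, abs_of_pos hdz] at habs
      nlinarith [abs_nonneg c]
    rw [abs_lt] at hcT
    apply Finset.mem_biUnion.2
    refine ⟨c, ?_, ?_⟩
    · rw [hSdef]
      exact Finset.mem_erase.2 ⟨hcne, Finset.mem_Icc.2 ⟨by omega, by omega⟩⟩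
    · apply Finset.mem_filter.2
      exact ⟨hp, by rw [hc, mul_comm]⟩
  obtain ⟨t₀, ht₀S, hEt⟩ := exists_big_fiber E S _ hSne hcov
  set E₀ : Finset (ℤ × ℤ) := E.filter (fun p => ρ p.1 - ρ p.2 = t₀ * d) with hE₀def
  have hE₀R : C^2/(8*K)*(N:ℝ) ≤ (E₀.card:ℝ) := by
    have h1 : (E.card:ℝ) ≤ 2*(T:ℝ)*(E₀.card:ℝ) := by
      have h0 : (E.card:ℝ) ≤ (S.card:ℝ) * (E₀.card:ℝ) := by exact_mod_cast hEt
      nlinarith [Nat.cast_nonneg (α := ℝ) E₀.card]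
    have h2 : (N:ℝ) ≤ C^2*(N:ℝ)*T/(4*K) := by
      rw [le_div_iff₀ (by positivity)]
      nlinarith
    have h3 : 2*(T:ℝ)*(C^2/(8*K)*(N:ℝ)) = C^2*(N:ℝ)*T/(4*K) := by field_simp; ring
    have h5 : C^2*(N:ℝ)*T/(4*K) ≤ C^2*(N:ℝ)*T/(2*K) - N := by
      have he : C^2*(N:ℝ)*T/(2*K) = 2 * (C^2*(N:ℝ)*T/(4*K)) := by ring
      linarith
    have h4 : 2*(T:ℝ) * (C^2/(8*K)*(N:ℝ)) ≤ 2*(T:ℝ) * (E₀.card:ℝ) := by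
      rw [h3]
      linarith
    exact le_of_mul_le_mul_left h4 (by positivity : (0:ℝ) < 2*(T:ℝ))
  have ht₀b : t₀ ≠ 0 ∧ -(T:ℤ)+1 ≤ t₀ ∧ t₀ ≤ (T:ℤ)-1 := by
    rw [hSdef] at ht₀S
    have h1 := Finset.mem_erase.1 ht₀S
    have h2 := Finset.mem_Icc.1 h1.2
    exact ⟨h1.1, h2.1, h2.2⟩
  -- STEP 4 : define δ and prove the two properties
  set Dd : ℤ := t₀ * d * k with hDdef
  have hDne : Dd ≠ 0 := by
    rw [hDdef]
    exact mul_ne_zero (mul_ne_zero ht₀b.1 (by omega)) hk0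
  set δ : ℝ := nearestIntDist ((Dd:ℝ) * α) with hδdef
  have hE₀mem : ∀ p ∈ E₀, p.1 ∈ A ∧ p.2 ∈ A ∧ p.1 ≠ p.2 ∧ p.1 - p.2 = Dd := by
    intro p hp
    rw [hE₀def] at hp
    have h1 := Finset.mem_filter.1 hp
    have h2 := h1.1
    rw [hEdef] at h2
    simp only [Finset.mem_filter, Finset.mem_product] at h2
    obtain ⟨⟨hp1, hp2⟩, hpne, _⟩ := h2
    refine ⟨hp1, hp2, hpne, ?_⟩
    have e1 := (hρ _ hp1).2.2
    have e2 := (hρ _ hp2).2.2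
    have e3 := h1.2
    rw [hDdef]
    calc p.1 - p.2 = (ρ p.1 - ρ p.2) * k := by linear_combination e1 - e2
      _ = t₀ * d * k := by rw [e3]
  refine ⟨δ, NID.nonneg _, ?_, ?_⟩
  · -- N * δ ≤ 8 T² / C
    have h1 : (Dd:ℝ)*α = (t₀:ℝ) * ((d:ℝ)*β) := by
      rw [hβdef, hDdef]; push_cast; ring
    have h2 : δ ≤ ((|t₀| : ℤ):ℝ) * nearestIntDist ((d:ℝ)*β) := by
      rw [hδdef, h1]
      exact NID.zsmul t₀ ((d:ℝ)*β)
    have ht₀T : ((|t₀| : ℤ):ℝ) ≤ (T:ℝ) := by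
      have : |t₀| ≤ (T:ℤ) := abs_le.2 ⟨by omega, by omega⟩
      exact_mod_cast this
    have h3 : δ ≤ (T:ℝ) * (8*T/(C*N)) := by
      calc δ ≤ ((|t₀| : ℤ):ℝ) * nearestIntDist ((d:ℝ)*β) := h2
        _ ≤ (T:ℝ) * (8*T/(C*N)) := by
            apply mul_le_mul ht₀T hdβ (NID.nonneg _) (le_of_lt hT0)
    calc (N:ℝ) * δ ≤ (N:ℝ) * ((T:ℝ) * (8*T/(C*N))) := by
          apply mul_le_mul_of_nonneg_left h3 (le_of_lt hN0)
      _ = 8 * T^2 / C := by field_simp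
  · -- the counting property
    intro s₁ s₂ hs₁ hs₂
    have hs12 : s₁ / N ≤ s₂ / N := le_trans (le_of_lt hs₁) hs₂
    set xf : ℕ → ℝ := fun n => Int.fract ((a n : ℝ) * α) with hxfdef
    rw [pcCnt_eq xf s₁ N, pcCnt_eq xf s₂ N]
    set P₁ := (Finset.Icc 1 N ×ˢ Finset.Icc 1 N).filter
      (fun p => p.1 ≠ p.2 ∧ nearestIntDist (xf p.1 - xf p.2) ≤ s₁ / N) with hP₁def
    set P₂ := (Finset.Icc 1 N ×ˢ Finset.Icc 1 N).filter
      (fun p => p.1 ≠ p.2 ∧ nearestIntDist (xf p.1 - xf p.2) ≤ s₂ / N) with hP₂def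
    have hnd1 : ∀ p ∈ E₀, nearestIntDist (xf (nx p.1) - xf (nx p.2)) = δ := by
      intro p hp
      obtain ⟨hp1, hp2, hpne, hpd⟩ := hE₀mem p hp
      have e1 : ((a (nx p.1) : ℕ):ℝ) = ((p.1 : ℤ):ℝ) := by exact_mod_cast (hnx _ hp1).2.2
      have e2 : ((a (nx p.2) : ℕ):ℝ) = ((p.2 : ℤ):ℝ) := by exact_mod_cast (hnx _ hp2).2.2
      have hpdR : ((p.1 : ℤ):ℝ) - ((p.2 : ℤ):ℝ) = ((Dd:ℤ):ℝ) := by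
        have : ((p.1 - p.2 : ℤ):ℝ) = ((Dd:ℤ):ℝ) := by exact_mod_cast congrArg Int.cast hpd
        push_cast at this ⊢
        linarith
      rw [hxfdef]
      dsimp only
      rw [e1, e2, hδdef]
      apply NID.eq_of_sub_int (n := ⌊((p.2 : ℤ):ℝ)*α⌋ - ⌊((p.1 : ℤ):ℝ)*α⌋)
      rw [Int.fract, Int.fract]
      push_cast
      linear_combination α * hpdR
    have hnd2 : ∀ p ∈ E₀, nearestIntDist (xf (nx p.2) - xf (nx p.1)) = δ := by
      intro p hp
      rw [show xf (nx p.2) - xf (nx p.1) = -(xf (nx p.1) - xf (nx p.2)) by ring, NID.neg]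
      exact hnd1 p hp
    set im1 := E₀.image (fun p => (nx p.1, nx p.2)) with him1def
    set im2 := E₀.image (fun p => (nx p.2, nx p.1)) with him2def
    have him1card : im1.card = E₀.card := by
      rw [him1def]
      apply Finset.card_image_of_injOn
      intro p hp q hq heq
      obtain ⟨hp1, hp2, _, _⟩ := hE₀mem p hp
      obtain ⟨hq1, hq2, _, _⟩ := hE₀mem q hq
      simp only [Prod.mk.injEq] at heq
      have e1 : p.1 = q.1 := by
        rw [← (hnx _ hp1).2.2, ← (hnx _ hq1).2.2, heq.1]
      have e2 : p.2 = q.2 := by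
        rw [← (hnx _ hp2).2.2, ← (hnx _ hq2).2.2, heq.2]
      exact Prod.ext e1 e2
    have him2card : im2.card = E₀.card := by
      rw [him2def]
      apply Finset.card_image_of_injOn
      intro p hp q hq heq
      obtain ⟨hp1, hp2, _, _⟩ := hE₀mem p hp
      obtain ⟨hq1, hq2, _, _⟩ := hE₀mem q hq
      simp only [Prod.mk.injEq] at heq
      have e1 : p.1 = q.1 := by
        rw [← (hnx _ hp1).2.2, ← (hnx _ hq1).2.2, heq.2]
      have e2 : p.2 = q.2 := by
        rw [← (hnx _ hp2).2.2, ← (hnx _ hq2).2.2, heq.1]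
      exact Prod.ext e1 e2
    have hmem1 : ∀ p ∈ E₀, ((nx p.1 ∈ Finset.Icc 1 N) ∧ (nx p.2 ∈ Finset.Icc 1 N))
        ∧ nx p.1 ≠ nx p.2 := by
      intro p hp
      obtain ⟨hp1, hp2, hpne, _⟩ := hE₀mem p hp
      refine ⟨⟨Finset.mem_Icc.2 ⟨(hnx _ hp1).1, (hnx _ hp1).2.1⟩,
        Finset.mem_Icc.2 ⟨(hnx _ hp2).1, (hnx _ hp2).2.1⟩⟩, ?_⟩
      intro hcon
      apply hpne
      rw [← (hnx _ hp1).2.2, ← (hnx _ hp2).2.2, hcon]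
    have him1sub : im1 ⊆ P₂ := by
      rw [him1def, hP₂def]
      intro z hz
      obtain ⟨p, hp, rfl⟩ := Finset.mem_image.1 hz
      apply Finset.mem_filter.2
      dsimp only
      refine ⟨Finset.mem_product.2 ⟨(hmem1 p hp).1.1, (hmem1 p hp).1.2⟩, (hmem1 p hp).2, ?_⟩
      rw [hnd1 p hp]
      exact hs₂
    have him2sub : im2 ⊆ P₂ := by
      rw [him2def, hP₂def]
      intro z hz
      obtain ⟨p, hp, rfl⟩ := Finset.mem_image.1 hz
      apply Finset.mem_filter.2
      dsimp only
      refine ⟨Finset.mem_product.2 ⟨(hmem1 p hp).1.2, (hmem1 p hp).1.1⟩,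
        fun hcon => (hmem1 p hp).2 hcon.symm, ?_⟩
      rw [hnd2 p hp]
      exact hs₂
    have hdisj1 : Disjoint P₁ im1 := by
      rw [Finset.disjoint_right, him1def]
      intro z hz hzP
      obtain ⟨p, hp, rfl⟩ := Finset.mem_image.1 hz
      rw [hP₁def] at hzP
      have hcond := (Finset.mem_filter.1 hzP).2.2
      dsimp only at hcond
      rw [hnd1 p hp] at hcond
      linarith
    have hdisj2 : Disjoint P₁ im2 := by
      rw [Finset.disjoint_right, him2def]
      intro z hz hzP
      obtain ⟨p, hp, rfl⟩ := Finset.mem_image.1 hz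
      rw [hP₁def] at hzP
      have hcond := (Finset.mem_filter.1 hzP).2.2
      dsimp only at hcond
      rw [hnd2 p hp] at hcond
      linarith
    have hdisj12 : Disjoint im1 im2 := by
      rw [Finset.disjoint_left, him1def, him2def]
      intro z h1 h2
      obtain ⟨p, hp, hz1⟩ := Finset.mem_image.1 h1
      obtain ⟨q, hq, hz2⟩ := Finset.mem_image.1 h2
      obtain ⟨hp1, hp2, _, hpd⟩ := hE₀mem p hp
      obtain ⟨hq1, hq2, _, hqd⟩ := hE₀mem q hq
      have e1 : (a z.1 : ℤ) - (a z.2 : ℤ) = Dd := by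
        rw [← hz1]
        dsimp only
        rw [(hnx _ hp1).2.2, (hnx _ hp2).2.2]
        exact hpd
      have e2 : (a z.1 : ℤ) - (a z.2 : ℤ) = -Dd := by
        rw [← hz2]
        dsimp only
        rw [(hnx _ hq2).2.2, (hnx _ hq1).2.2]
        omega
      omega
    have hP₁P₂ : P₁ ⊆ P₂ := by
      rw [hP₁def, hP₂def]
      intro z hz
      have hz' := Finset.mem_filter.1 hz
      exact Finset.mem_filter.2 ⟨hz'.1, hz'.2.1, le_trans hz'.2.2 hs12⟩
    have hsubU : P₁ ∪ im1 ∪ im2 ⊆ P₂ :=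
      Finset.union_subset (Finset.union_subset hP₁P₂ him1sub) him2sub
    have hcards : P₁.card + E₀.card + E₀.card ≤ P₂.card := by
      have h1 := Finset.card_le_card hsubU
      rw [Finset.card_union_of_disjoint (Finset.disjoint_union_left.2 ⟨hdisj2, hdisj12⟩),
        Finset.card_union_of_disjoint hdisj1] at h1
      omega
    have hcR : (P₁.card:ℝ) + 2*(E₀.card:ℝ) ≤ (P₂.card:ℝ) := by
      have : ((P₁.card + E₀.card + E₀.card : ℕ):ℝ) ≤ ((P₂.card : ℕ):ℝ) := by
        exact_mod_cast hcards
      push_cast at this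
      linarith
    linarith [hE₀R]





lemma pairCorrFn_eq_cnt (x : ℕ → ℝ) (s : ℝ) (N : ℕ) :
    pairCorrFn x s N = (1/(N:ℝ)) * (pcCnt x s N : ℝ) := rfl

lemma le_of_freq {u : ℕ → ℝ} {l c : ℝ} (hu : Tendsto u atTop (nhds l))
    (hf : ∃ᶠ i in atTop, c ≤ u i) : c ≤ l := by
  by_contra hlt
  push_neg at hlt
  have hev : ∀ᶠ i in atTop, u i < c := (tendsto_order.1 hu).2 c hlt
  obtain ⟨i, h1, h2⟩ := (hf.and_eventually hev).exists
  linarith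


/-- If `(a_n)_{n ≥ 1}` is a strictly increasing sequence of positive integers which is
quasi-arithmetic of degree 1, then for no real `α` does `({a_n α})_{n ≥ 1}` have
Poissonian pair correlations. -/
theorem quasi_arithmetic_degree_one_not_poissonian
    (a : ℕ → ℕ)
    (hmono : ∀ m n, 1 ≤ m → m < n → a m < a n)
    (hpos : ∀ n, 1 ≤ n → 0 < a n)
    (hqa : QuasiArithmetic a 1) (α : ℝ) :
    ¬ HasPoissonianPairCorrelations (fun n => Int.fract ((a n : ℝ) * α)) := by

  classical
  intro hPPC
  obtain ⟨C, K, hC, hK, Nseq, hNmono, hNpos, hstruct⟩ := hqa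
  set xf : ℕ → ℝ := fun n => Int.fract ((a n : ℝ) * α) with hxfdef
  set T : ℕ := ⌈(4*K)/(C^2)⌉₊ + 2 with hTdef
  have hT2 : 2 ≤ T := by omega
  have hT : 4 * K ≤ C^2 * T := by
    have h1 : (4*K)/(C^2) ≤ (T:ℝ) := by
      refine le_trans (Nat.le_ceil _) ?_
      rw [hTdef]
      push_cast
      linarith
    calc 4*K = C^2 * ((4*K)/(C^2)) := by field_simp
      _ ≤ C^2 * T := by
          apply mul_le_mul_of_nonneg_left h1 (by positivity)
  have hT0 : (0:ℝ) < T := by positivity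
  set c₂ : ℝ := C^2/(8*K) with hc₂def
  have hc₂0 : 0 < c₂ := by rw [hc₂def]; positivity
  set step : ℝ := c₂/4 with hstepdef
  have hstep0 : 0 < step := by rw [hstepdef]; linarith
  set V : ℝ := 8*(T:ℝ)^2/C with hVdef
  have hV0 : 0 < V := by rw [hVdef]; positivity
  set m : ℕ := ⌊V/step⌋₊ + 1 with hmdef
  -- the per-index key step
  have hkey : ∀ i, 4*(T:ℝ) ≤ C*(Nseq i) → ∃ tb : ℕ, tb < m ∧
      ((pcCnt xf ((tb:ℝ)*step - step/2) (Nseq i) : ℝ) + 2*c₂*(Nseq i)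
        ≤ (pcCnt xf (((tb:ℝ)+1)*step) (Nseq i) : ℝ)) := by
    intro i hNi
    have hN0 : (0:ℝ) < Nseq i := by
      have := hNpos i
      exact_mod_cast this
    obtain ⟨A, hidx, hcard, h, kfn, sfn, hsubset, hprod⟩ := hstruct i
    have hsub : ∀ x ∈ A, ∃ r : ℤ, 0 ≤ r ∧ r < sfn 0 ∧ x = h + r * kfn 0 := by
      intro x hx
      obtain ⟨r, hr1, hr2⟩ := hsubset hx
      refine ⟨r 0, (hr1 0).1, (hr1 0).2, ?_⟩
      rw [hr2, Fin.sum_univ_one]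
    have hLK : ((sfn 0 : ℤ):ℝ) ≤ K * (Nseq i) := by
      have hp : (∏ j, sfn j) = sfn 0 := Fin.prod_univ_one sfn
      rw [hp] at hprod
      exact hprod
    obtain ⟨δ, hδ0, hδV, hcount⟩ :=
      main_step a α C K hC hK T hT2 hT (Nseq i) hNi A hidx hcard h (sfn 0) (kfn 0) hsub hLK
    set tb : ℕ := ⌊(Nseq i : ℝ)*δ/step⌋₊ with htbdef
    have hfl1 : (tb:ℝ)*step ≤ (Nseq i : ℝ)*δ := by
      have h1 : (tb:ℝ) ≤ (Nseq i : ℝ)*δ/step := Nat.floor_le (by positivity)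
      calc (tb:ℝ)*step ≤ ((Nseq i : ℝ)*δ/step)*step := by
            apply mul_le_mul_of_nonneg_right h1 (le_of_lt hstep0)
        _ = (Nseq i : ℝ)*δ := by field_simp
    have hfl2 : (Nseq i : ℝ)*δ < ((tb:ℝ)+1)*step := by
      have h1 : (Nseq i : ℝ)*δ/step < (tb:ℝ)+1 := Nat.lt_floor_add_one _
      calc (Nseq i : ℝ)*δ = ((Nseq i : ℝ)*δ/step)*step := by field_simp
        _ < ((tb:ℝ)+1)*step := by
            apply mul_lt_mul_of_pos_right h1 hstep0
    refine ⟨tb, ?_, ?_⟩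
    · have hδV' : (Nseq i:ℝ)*δ ≤ V := by rw [hVdef]; exact hδV
      have h1 : tb ≤ ⌊V/step⌋₊ := by
        apply Nat.floor_le_floor
        gcongr
      omega
    · have hcc := hcount ((tb:ℝ)*step - step/2) (((tb:ℝ)+1)*step) ?_ ?_
      · rw [hc₂def]
        exact hcc
      · rw [div_lt_iff₀ hN0]
        nlinarith
      · rw [le_div_iff₀ hN0]
        nlinarith
  -- pigeonhole in tb
  have hfreq : ∃ tb, tb < m ∧ ∃ᶠ i in atTop,
      ((pcCnt xf ((tb:ℝ)*step - step/2) (Nseq i) : ℝ) + 2*c₂*(Nseq i)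
        ≤ (pcCnt xf (((tb:ℝ)+1)*step) (Nseq i) : ℝ)) := by
    by_contra hcon
    push_neg at hcon
    have hev : ∀ᶠ i in atTop, ∀ t ∈ Finset.range m,
        ¬ ((pcCnt xf ((t:ℝ)*step - step/2) (Nseq i) : ℝ) + 2*c₂*(Nseq i)
          ≤ (pcCnt xf (((t:ℝ)+1)*step) (Nseq i) : ℝ)) := by
      rw [Finset.eventually_all]
      intro t ht
      exact (hcon t (Finset.mem_range.1 ht)).mono fun i hi => not_le.2 hi
    have hev2 : ∀ᶠ i in atTop, 4*(T:ℝ) ≤ C*(Nseq i) := by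
      rw [eventually_atTop]
      refine ⟨⌈4*(T:ℝ)/C⌉₊, fun i hi => ?_⟩
      have h1 : (⌈4*(T:ℝ)/C⌉₊ : ℝ) ≤ i := by exact_mod_cast hi
      have h2 : 4*(T:ℝ)/C ≤ ⌈4*(T:ℝ)/C⌉₊ := Nat.le_ceil _
      have h3 : (i:ℝ) ≤ Nseq i := by exact_mod_cast hNmono.le_apply
      have h4 : 4*(T:ℝ)/C ≤ Nseq i := by linarith
      calc 4*(T:ℝ) = C * (4*T/C) := by field_simp
        _ ≤ C * Nseq i := by apply mul_le_mul_of_nonneg_left h4 (le_of_lt hC)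
    obtain ⟨i, h1, h2⟩ := (hev.and hev2).exists
    obtain ⟨tb, htbm, hineq⟩ := hkey i h2
    exact h1 tb (Finset.mem_range.2 htbm) hineq
  obtain ⟨tb, htbm, hfr⟩ := hfreq
  have hNtend : Tendsto (fun i => Nseq i) atTop atTop := hNmono.tendsto_atTop
  set s₂ : ℝ := ((tb:ℝ)+1)*step with hs₂def
  have hs₂0 : 0 < s₂ := by rw [hs₂def]; positivity
  have hlim2 : Tendsto (fun i => pairCorrFn xf s₂ (Nseq i)) atTop (nhds (2*s₂)) :=
    (hPPC s₂ hs₂0).comp hNtend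
  rcases Nat.eq_zero_or_pos tb with ht0 | ht1
  · -- tb = 0
    have hfr2 : ∃ᶠ i in atTop, 2*c₂ ≤ pairCorrFn xf s₂ (Nseq i) := by
      apply hfr.mono
      intro i hi
      have hN0 : (0:ℝ) < Nseq i := by exact_mod_cast hNpos i
      rw [pairCorrFn_eq_cnt]
      have hge0 : (0:ℝ) ≤ (pcCnt xf ((tb:ℝ)*step - step/2) (Nseq i) : ℝ) := Nat.cast_nonneg _
      have heq : (1/(Nseq i:ℝ)) * (2*c₂*(Nseq i)) = 2*c₂ := by field_simp
      rw [← heq]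
      apply mul_le_mul_of_nonneg_left ?_ (by positivity : (0:ℝ) ≤ 1/(Nseq i:ℝ))
      linarith [hi]
    have hfin := le_of_freq hlim2 hfr2
    rw [hs₂def] at hfin
    have ht0R : ((tb:ℕ):ℝ) = 0 := by rw [ht0]; norm_num
    rw [ht0R, hstepdef] at hfin
    linarith
  · -- tb ≥ 1
    set s₁ : ℝ := (tb:ℝ)*step - step/2 with hs₁def
    have hs₁0 : 0 < s₁ := by
      rw [hs₁def]
      have : (1:ℝ) ≤ tb := by exact_mod_cast ht1
      nlinarith
    have hlim1 : Tendsto (fun i => pairCorrFn xf s₁ (Nseq i)) atTop (nhds (2*s₁)) :=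
      (hPPC s₁ hs₁0).comp hNtend
    have hlimd : Tendsto (fun i => pairCorrFn xf s₂ (Nseq i) - pairCorrFn xf s₁ (Nseq i))
        atTop (nhds (2*s₂ - 2*s₁)) := hlim2.sub hlim1
    have hfr2 : ∃ᶠ i in atTop,
        2*c₂ ≤ pairCorrFn xf s₂ (Nseq i) - pairCorrFn xf s₁ (Nseq i) := by
      apply hfr.mono
      intro i hi
      have hN0 : (0:ℝ) < Nseq i := by exact_mod_cast hNpos i
      rw [pairCorrFn_eq_cnt, pairCorrFn_eq_cnt]
      have hNinv : (0:ℝ) ≤ 1/(Nseq i:ℝ) := by positivity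
      have h5 : 2*c₂*(Nseq i:ℝ) ≤ (pcCnt xf s₂ (Nseq i) : ℝ) - (pcCnt xf s₁ (Nseq i) : ℝ) := by
        linarith [hi]
      have h6 := mul_le_mul_of_nonneg_left h5 hNinv
      calc 2*c₂ = (1/(Nseq i:ℝ)) * (2*c₂*(Nseq i)) := by field_simp
        _ ≤ (1/(Nseq i:ℝ)) * ((pcCnt xf s₂ (Nseq i) : ℝ) - (pcCnt xf s₁ (Nseq i) : ℝ)) := h6
        _ = (1/(Nseq i:ℝ)) * (pcCnt xf s₂ (Nseq i) : ℝ)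
            - (1/(Nseq i:ℝ)) * (pcCnt xf s₁ (Nseq i) : ℝ) := by ring
    have hle := le_of_freq hlimd hfr2
    have h32 : 2*s₂ - 2*s₁ = 3*step := by rw [hs₁def, hs₂def]; ring
    rw [h32, hstepdef] at hle
    linarith
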